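/- Let Σ be a complete fan in R^n and fix a complete flag of cones σ_0 = {0} ⊂ σ_1 ⊂ ... ⊂ σ_n in Σ with dim σ_i = i. For i = 1,...,n let z_i be the product of the variables x_j corresponding to ray generators η_j with η_j ∈ σ_i and η_j ∉ σ_{i-1}, and let z_{n+1} be the product of the variables x_j with η_j ∉ σ_n. Then for every maximal cone τ of Σ, the monomial x̂_τ = ∏_{η_j ∉ τ} x_j is divisible by z_i for some i ∈ {1,...,n+1}. In particular the irrelevant ideal B(Σ) is contained in the ideal ⟨z_1,...,z_{n+1}⟩. -/

import Mathlib

open scoped Classical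

noncomputable section

/-- `F` is a face of the pointed cone `σ`. -/
def IsFaceOf {n : ℕ} (F σ : PointedCone ℝ (Fin n → ℝ)) : Prop :=
  F ≤ σ ∧ ∀ x ∈ σ, ∀ y ∈ σ, x + y ∈ F → x ∈ F ∧ y ∈ F

/-- A fan in `ℝ^n` whose rays are generated by `η 0, …, η (s-1)`:
a collection of (pointed, ray-generated) cones closed under taking faces,
such that the intersection of two cones is a face of each. -/
structure Fan (n s : ℕ) where
  η : Fin s → (Fin n → ℝ)
  cones : Set (PointedCone ℝ (Fin n → ℝ))
  bot_mem : ⊥ ∈ cones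
  face_mem : ∀ σ ∈ cones, ∀ F, IsFaceOf F σ → F ∈ cones
  inter_face : ∀ σ ∈ cones, ∀ τ ∈ cones, IsFaceOf (σ ⊓ τ) σ
  ray_gen : ∀ σ ∈ cones, (σ : Set (Fin n → ℝ)) ⊆
      ↑(Submodule.span {c : ℝ // 0 ≤ c} {x | ∃ j, η j ∈ σ ∧ x = η j})

/-- The dimension of a cone: the dimension of its linear span. -/
def coneDim {n : ℕ} (σ : PointedCone ℝ (Fin n → ℝ)) : ℕ :=
  Module.finrank ℝ (Submodule.span ℝ (σ : Set (Fin n → ℝ)))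

/-- Any element of the real span of a pointed cone is a difference of two cone elements. -/
lemma mem_sub_of_mem_span {n : ℕ} (F : PointedCone ℝ (Fin n → ℝ)) {x : Fin n → ℝ}
    (hx : x ∈ Submodule.span ℝ (F : Set (Fin n → ℝ))) :
    ∃ a ∈ F, ∃ b ∈ F, x = a - b := by
  induction hx using Submodule.span_induction with
  | mem x hxF => exact ⟨x, hxF, 0, F.zero_mem, (sub_zero x).symm⟩
  | zero => exact ⟨0, F.zero_mem, 0, F.zero_mem, (sub_zero 0).symm⟩
  | add x y hx hy ihx ihy =>
      obtain ⟨a, ha, b, hb, rfl⟩ := ihx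
      obtain ⟨c, hc, d, hd, rfl⟩ := ihy
      exact ⟨a + c, F.add_mem ha hc, b + d, F.add_mem hb hd, by abel⟩
  | smul c x hx ih =>
      obtain ⟨a, ha, b, hb, rfl⟩ := ih
      rcases le_or_gt 0 c with h | h
      · refine ⟨c • a, F.smul_mem h ha, c • b, F.smul_mem h hb, ?_⟩
        rw [smul_sub]
      · refine ⟨(-c) • b, F.smul_mem (by linarith) hb,
          (-c) • a, F.smul_mem (by linarith) ha, ?_⟩
        rw [smul_sub, neg_smul, neg_smul]
        abel

/-- If `F` is a face of `σ` and `x ∈ σ` lies in the real span of `F`, then `x ∈ F`. -/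
lemma mem_of_mem_span_face {n : ℕ} {F σ : PointedCone ℝ (Fin n → ℝ)} (hF : IsFaceOf F σ)
    {x : Fin n → ℝ} (hx : x ∈ σ)
    (hx' : x ∈ Submodule.span ℝ (F : Set (Fin n → ℝ))) : x ∈ F := by
  obtain ⟨a, ha, b, hb, rfl⟩ := mem_sub_of_mem_span F hx'
  have hsum : (a - b) + b ∈ F := by simpa using ha
  exact (hF.2 _ hx _ (hF.1 hb) hsum).1

/-- Given a complete fan `Σ` in `ℝ^n` and a complete flag of cones
`σ 0 = {0} ⊂ σ 1 ⊂ ⋯ ⊂ σ n` with `dim (σ i) = i`, let `z 1, …, z n` be the products of the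
variables for the rays in `σ i ∖ σ (i-1)` and `z (n+1)` the product of the variables for
rays outside `σ n`.  Then for every maximal (`n`-dimensional) cone `τ` of `Σ` the monomial
`x̂_τ = ∏_{η j ∉ τ} x j` is divisible by some `z i`; in particular the irrelevant ideal
`B(Σ)` is contained in `⟨z 1, …, z (n+1)⟩`. -/
theorem statement0 {n s : ℕ} (k : Type*) [Field k] (Sig : Fan n s)
    (hcomplete : ∀ x : Fin n → ℝ, ∃ σ ∈ Sig.cones, x ∈ σ)
    (σ : Fin (n + 1) → PointedCone ℝ (Fin n → ℝ))
    (hmem : ∀ i, σ i ∈ Sig.cones)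
    (h0 : σ 0 = ⊥)
    (hflag : ∀ i : Fin n, σ i.castSucc ≤ σ i.succ)
    (hdim : ∀ i : Fin (n + 1), coneDim (σ i) = (i : ℕ))
    (z : Fin (n + 1) → MvPolynomial (Fin s) k)
    (hz : ∀ i : Fin n, z i.castSucc =
      ∏ j ∈ Finset.univ.filter
        (fun j => Sig.η j ∈ σ i.succ ∧ Sig.η j ∉ σ i.castSucc), MvPolynomial.X j)
    (hzlast : z (Fin.last n) =
      ∏ j ∈ Finset.univ.filter (fun j => Sig.η j ∉ σ (Fin.last n)), MvPolynomial.X j) :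
    (∀ τ ∈ Sig.cones, coneDim τ = n →
        ∃ i : Fin (n + 1), z i ∣
          ∏ j ∈ Finset.univ.filter (fun j => Sig.η j ∉ τ), MvPolynomial.X j) ∧
    Ideal.span {p : MvPolynomial (Fin s) k | ∃ τ ∈ Sig.cones, coneDim τ = n ∧
        p = ∏ j ∈ Finset.univ.filter (fun j => Sig.η j ∉ τ), MvPolynomial.X j} ≤
      Ideal.span (Set.range z) := by
  classical
  have hdvd : ∀ τ ∈ Sig.cones, coneDim τ = n →
      ∃ i : Fin (n + 1), z i ∣
        ∏ j ∈ Finset.univ.filter (fun j => Sig.η j ∉ τ), MvPolynomial.X j := by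
    intro τ hτ _
    -- find first index where the flag leaves τ (or none)
    have key : σ (Fin.last n) ≤ τ ∨ ∃ i : Fin n, σ i.castSucc ≤ τ ∧ ¬ σ i.succ ≤ τ := by
      have main : ∀ K : ℕ, ∀ hK : K < n + 1,
          σ ⟨K, hK⟩ ≤ τ ∨ ∃ i : Fin n, σ i.castSucc ≤ τ ∧ ¬ σ i.succ ≤ τ := by
        intro K
        induction K with
        | zero =>
            intro hK
            left
            have : (⟨0, hK⟩ : Fin (n + 1)) = 0 := rfl
            rw [this, h0]
            exact bot_le
        | succ m ih =>
            intro hK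
            rcases ih (by omega) with h | h
            · by_cases h2 : σ ⟨m + 1, hK⟩ ≤ τ
              · exact Or.inl h2
              · right
                refine ⟨⟨m, by omega⟩, ?_, ?_⟩
                · exact h
                · exact h2
            · exact Or.inr h
      have := main n (by omega)
      have hlast : (⟨n, by omega⟩ : Fin (n + 1)) = Fin.last n := rfl
      rwa [hlast] at this
    rcases key with hcase | ⟨i, hle, hnle⟩
    · -- case 1: σ_n ≤ τ, then τ ≤ σ_n and z_last divides
      refine ⟨Fin.last n, ?_⟩
      rw [hzlast]
      apply Finset.prod_dvd_prod_of_subset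
      intro j hj
      simp only [Finset.mem_filter, Finset.mem_univ, true_and] at hj ⊢
      intro hjτ
      apply hj
      have hface : IsFaceOf (τ ⊓ σ (Fin.last n)) τ := Sig.inter_face τ hτ _ (hmem _)
      rw [inf_eq_right.mpr hcase] at hface
      have hspan : Submodule.span ℝ ((σ (Fin.last n) : Set (Fin n → ℝ))) = ⊤ := by
        apply Submodule.eq_top_of_finrank_eq
        have h1 := hdim (Fin.last n)
        simp only [coneDim, Fin.val_last] at h1
        rw [h1]
        simp
      exact mem_of_mem_span_face hface hjτ (by rw [hspan]; trivial)
    · -- case 2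
      refine ⟨i.castSucc, ?_⟩
      rw [hz i]
      apply Finset.prod_dvd_prod_of_subset
      intro j hj
      simp only [Finset.mem_filter, Finset.mem_univ, true_and] at hj ⊢
      obtain ⟨hj1, hj2⟩ := hj
      intro hjτ
      apply hnle
      set F' := σ i.succ ⊓ τ with hF'def
      have hfaceF' : IsFaceOf F' (σ i.succ) := Sig.inter_face _ (hmem _) τ hτ
      have hstep : σ i.castSucc ≤ F' := le_inf (hflag i) hle
      have hηF' : Sig.η j ∈ F' := ⟨hj1, hjτ⟩
      have hface_prev : IsFaceOf (σ i.castSucc) (σ i.succ) := by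
        have h := Sig.inter_face (σ i.succ) (hmem _) (σ i.castSucc) (hmem _)
        rwa [inf_eq_right.mpr (hflag i)] at h
      have hnotspan : Sig.η j ∉ Submodule.span ℝ ((σ i.castSucc : Set (Fin n → ℝ))) :=
        fun hms => hj2 (mem_of_mem_span_face hface_prev hj1 hms)
      have hηne : Sig.η j ≠ 0 := fun h => hnotspan (h ▸ Submodule.zero_mem _)
      set W0 := Submodule.span ℝ ((σ i.castSucc : Set (Fin n → ℝ))) with hW0
      set V := Submodule.span ℝ ({Sig.η j} : Set (Fin n → ℝ)) with hV
      have hdisj : W0 ⊓ V = ⊥ := by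
        exact disjoint_iff.mp
          (Submodule.disjoint_span_singleton.mpr (fun h => absurd h hnotspan))
      have hrank_sup : Module.finrank ℝ ↥(W0 ⊔ V) = (i : ℕ) + 1 := by
        have h1 := Submodule.finrank_sup_add_finrank_inf_eq W0 V
        rw [hdisj] at h1
        have h2 : Module.finrank ℝ ↥W0 = (i : ℕ) := by
          have := hdim i.castSucc
          simpa [coneDim] using this
        have h3 : Module.finrank ℝ ↥V = 1 := finrank_span_singleton hηne
        simp only [finrank_bot, add_zero] at h1
        omega
      have hsup_le : W0 ⊔ V ≤ Submodule.span ℝ ((F' : Set (Fin n → ℝ))) := by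
        apply sup_le
        · exact Submodule.span_mono hstep
        · rw [hV, Submodule.span_le]
          simp only [Set.singleton_subset_iff]
          exact Submodule.subset_span hηF'
      have hF'_le : Submodule.span ℝ ((F' : Set (Fin n → ℝ))) ≤
          Submodule.span ℝ ((σ i.succ : Set (Fin n → ℝ))) :=
        Submodule.span_mono hfaceF'.1
      have hspan_eq : Submodule.span ℝ ((F' : Set (Fin n → ℝ))) =
          Submodule.span ℝ ((σ i.succ : Set (Fin n → ℝ))) := by
        apply Submodule.eq_of_le_of_finrank_le hF'_le
        have hsucc : Module.finrank ℝ ↥(Submodule.span ℝ ((σ i.succ : Set (Fin n → ℝ))))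
            = (i : ℕ) + 1 := by
          have := hdim i.succ
          simpa [coneDim, Fin.val_succ] using this
        rw [hsucc]
        calc (i : ℕ) + 1 = Module.finrank ℝ ↥(W0 ⊔ V) := hrank_sup.symm
          _ ≤ Module.finrank ℝ ↥(Submodule.span ℝ ((F' : Set (Fin n → ℝ)))) :=
              Submodule.finrank_mono hsup_le
      intro x hx
      have hxspan : x ∈ Submodule.span ℝ ((F' : Set (Fin n → ℝ))) := by
        rw [hspan_eq]
        exact Submodule.subset_span hx
      exact (mem_of_mem_span_face hfaceF' hx hxspan).2
  refine ⟨hdvd, ?_⟩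
  rw [Ideal.span_le]
  rintro p ⟨τ, hτ, hdτ, rfl⟩
  obtain ⟨i, c, hc⟩ := hdvd τ hτ hdτ
  rw [hc]
  exact Ideal.mul_mem_right _ _ (Ideal.subset_span ⟨i, rfl⟩)
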